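/- Let T be a finite binary tree in which every internal node has exactly two children, and let x assign to every node of T a value in {0, 1, ⊥} such that for every internal node u with children v, w the PURIFY constraint holds on input x(u) with outputs (x(v), x(w)). Then: (1) at most one leaf of T has value ⊥ (equivalently, all leaves except possibly one have pure values); and (2) if the root has a pure value b ∈ {0, 1}, then every leaf has value b. -/
import Mathlib


/-- Values of Pure-Circuit nodes: 0, 1, or the garbage value ⊥. -/
inductive PCVal : Type
  | zero
  | one
  | bot
deriving DecidableEq

/-- A value is pure if it is 0 or 1. -/
def PCVal.pure (v : PCVal) : Prop := v = .zero ∨ v = .one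

/-- The PURIFY constraint on input `a` and outputs `b, c`. -/
def purifyOk (a b c : PCVal) : Prop :=
  (b.pure ∨ c.pure) ∧ (a.pure → b = a ∧ c = a)

/-- A finite binary tree in which every internal node has exactly two children,
with a value in `{0, 1, ⊥}` at every node. -/
inductive PTree : Type
  | leaf (v : PCVal)
  | node (v : PCVal) (l r : PTree)

/-- The value at the root of the tree. -/
def PTree.rootVal : PTree → PCVal
  | .leaf v => v
  | .node v _ _ => v

/-- The PURIFY constraint holds at every internal node: the input is the node's
value and the outputs are the values of its two children. -/
def PTree.ok : PTree → Prop
  | .leaf _ => True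
  | .node v l r => purifyOk v l.rootVal r.rootVal ∧ l.ok ∧ r.ok

/-- The list of values at the leaves of the tree. -/
def PTree.leaves : PTree → List PCVal
  | .leaf v => [v]
  | .node _ l r => l.leaves ++ r.leaves

lemma purePart (t : PTree) (h : t.ok) :
    ∀ b : PCVal, b.pure → t.rootVal = b → ∀ v ∈ t.leaves, v = b := by
  induction t with
  | leaf v =>
    intro b hb hr w hw
    simp [PTree.leaves] at hw
    subst hw
    simpa [PTree.rootVal] using hr
  | node v l r ihl ihr =>
    intro b hb hr w hw
    obtain ⟨⟨_, hp⟩, hl, hr'⟩ := h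
    simp [PTree.rootVal] at hr; subst hr
    obtain ⟨h1, h2⟩ := hp hb
    simp [PTree.leaves] at hw
    rcases hw with hw | hw
    · exact ihl hl v hb h1 w hw
    · exact ihr hr' v hb h2 w hw

lemma pureCount (t : PTree) (h : t.ok) (hp : t.rootVal.pure) :
    t.leaves.count PCVal.bot = 0 := by
  rw [List.count_eq_zero]
  intro hw
  have := purePart t h t.rootVal hp rfl PCVal.bot hw
  rcases hp with h0 | h0 <;> simp [← this] at h0

/-- In a binary tree of PURIFY gates: (1) at most one leaf has value ⊥, and
(2) if the root has a pure value `b`, then every leaf has value `b`. -/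
theorem purify_tree (t : PTree) (h : t.ok) :
    t.leaves.count PCVal.bot ≤ 1 ∧
    (∀ b : PCVal, b.pure → t.rootVal = b → ∀ v ∈ t.leaves, v = b) := by
  refine ⟨?_, purePart t h⟩
  induction t with
  | leaf v => simp [PTree.leaves]; cases v <;> simp [List.count_cons]
  | node v l r ihl ihr =>
    obtain ⟨⟨hor, hp⟩, hl, hr⟩ := h
    simp only [PTree.leaves, List.count_append]
    rcases hor with hpu | hpu
    · have := pureCount l hl hpu
      have h2 := ihr hr
      omega
    · have := pureCount r hr hpu
      have h2 := ihl hl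
      omega
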